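/- The graph obtained from the complete graph K_{n-1} (n ≥ 5) by adding a new vertex v joined to exactly three vertices of K_{n-1} has binomial(n,2) - n + 4 edges, is bridgeless, and has no orientation of diameter two. -/

import Mathlib

open SimpleGraph
open Finset

/-- `R` is an orientation of the simple graph `G`: every arc of `R` lies on an edge of `G`,
and every edge of `G` receives exactly one of its two possible directions. -/
def IsOrientation {V : Type*} (G : SimpleGraph V) (R : V → V → Prop) : Prop :=
  (∀ u v, R u v → G.Adj u v) ∧ ∀ u v, G.Adj u v → (R u v ↔ ¬ R v u)

/-- `RelPow R k u v` : there is a directed walk of length `k` from `u` to `v`. -/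
def RelPow {V : Type*} (R : V → V → Prop) : ℕ → V → V → Prop
  | 0, u, v => u = v
  | n + 1, u, v => ∃ w, R u w ∧ RelPow R n w v

/-- The digraph `R` has diameter at most `d`: any vertex can reach any other by a
directed walk of length at most `d`. -/
def DiamLE {V : Type*} (R : V → V → Prop) (d : ℕ) : Prop :=
  ∀ u v, ∃ k ≤ d, RelPow R k u v

/-- A digraph is strongly connected if every vertex can reach every other. -/
def StronglyConnected {V : Type*} (R : V → V → Prop) : Prop :=
  ∀ u v, Relation.ReflTransGen R u v

/-- A graph is bridgeless if it is connected and contains no bridge. -/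
def Bridgeless {V : Type*} (G : SimpleGraph V) : Prop :=
  G.Connected ∧ ∀ e, ¬ G.IsBridge e

/-- The graph `G_{n,d}`: the path `u_1 … u_d` is the set of indices `0,…,d-1`,
the clique `K_{n-d-1}` is the set of indices `d,…,n-2`, both endpoints `0` and `d-1`
of the path are joined to all clique vertices, and the extra vertex `u_3'` is the
index `n-1`, joined to `u_2, u_3, u_4`, i.e. to indices `1, 2, 3`. -/
def Gnd (n d : ℕ) : SimpleGraph (Fin n) :=
  SimpleGraph.fromRel (fun i j =>
    ((i : ℕ) + 1 = (j : ℕ) ∧ (j : ℕ) < d) ∨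
    (d ≤ (i : ℕ) ∧ (i : ℕ) < n - 1 ∧ d ≤ (j : ℕ) ∧ (j : ℕ) < n - 1) ∨
    (((i : ℕ) = 0 ∨ (i : ℕ) = d - 1) ∧ d ≤ (j : ℕ) ∧ (j : ℕ) < n - 1) ∨
    ((i : ℕ) = n - 1 ∧ ((j : ℕ) = 1 ∨ (j : ℕ) = 2 ∨ (j : ℕ) = 3)))

/-- The graph `H_{n,n-2}`: the cycle `u_1 … u_{n-1} u_1` is the set of indices
`0,…,n-2` in cyclic order, and the extra vertex `u_3'` is the index `n-1`,
joined to `u_2, u_3, u_4`, i.e. to indices `1, 2, 3`. -/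
def Hgraph (n : ℕ) : SimpleGraph (Fin n) :=
  SimpleGraph.fromRel (fun i j =>
    ((i : ℕ) + 1 = (j : ℕ) ∧ (j : ℕ) ≤ n - 2) ∨
    ((i : ℕ) = 0 ∧ (j : ℕ) = n - 2) ∨
    ((i : ℕ) = n - 1 ∧ ((j : ℕ) = 1 ∨ (j : ℕ) = 2 ∨ (j : ℕ) = 3)))


private def Gr (n : ℕ) : SimpleGraph (Fin n) :=
  SimpleGraph.fromRel (fun i j =>
    ((i : ℕ) < n - 1 ∧ (j : ℕ) < n - 1) ∨ ((i : ℕ) = n - 1 ∧ (j : ℕ) < 3))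

private lemma gr_adj {n : ℕ} (i j : Fin n) :
    (Gr n).Adj i j ↔ i ≠ j ∧
      (((i : ℕ) < n - 1 ∧ (j : ℕ) < n - 1) ∨ ((i : ℕ) = n - 1 ∧ (j : ℕ) < 3)
        ∨ ((j : ℕ) = n - 1 ∧ (i : ℕ) < 3)) := by
  rw [Gr, fromRel_adj]; tauto

private lemma gr_adj' {n : ℕ} (i j : Fin n) :
    (Gr n).Adj i j ↔ (i : ℕ) ≠ (j : ℕ) ∧
      (((i : ℕ) < n - 1 ∧ (j : ℕ) < n - 1) ∨ ((i : ℕ) = n - 1 ∧ (j : ℕ) < 3)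
        ∨ ((j : ℕ) = n - 1 ∧ (i : ℕ) < 3)) := by
  simp [gr_adj, Fin.ext_iff]

private instance grDec (n : ℕ) : DecidableRel (Gr n).Adj := fun i j =>
  decidable_of_iff' _ (gr_adj i j)

-- degree computations
private lemma gr_deg {n : ℕ} (hn : 5 ≤ n) (i : Fin n) :
    (Gr n).degree i = if (i : ℕ) = n - 1 then 3 else if (i : ℕ) < 3 then n - 1 else n - 2 := by
  classical
  rw [← card_neighborFinset_eq_degree, neighborFinset_eq_filter]
  split_ifs with h1 h2
  · have : Finset.filter (fun w => (Gr n).Adj i w) Finset.univ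
        = {(⟨0, by omega⟩ : Fin n), ⟨1, by omega⟩, ⟨2, by omega⟩} := by
      ext w
      simp only [mem_filter, mem_univ, true_and, gr_adj', mem_insert, mem_singleton,
        ← Fin.val_inj]
      omega
    rw [this]
    rw [Finset.card_insert_of_notMem (by simp [Fin.ext_iff]),
      Finset.card_insert_of_notMem (by simp [Fin.ext_iff]), Finset.card_singleton]
  · have : Finset.filter (fun w => (Gr n).Adj i w) Finset.univ = Finset.univ.erase i := by
      ext w
      simp only [mem_filter, mem_univ, true_and, gr_adj', mem_erase, Fin.ext_iff, Fin.val_mk,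
        and_true]
      have := w.isLt
      omega
    rw [this, Finset.card_erase_of_mem (mem_univ i), card_univ, Fintype.card_fin]
  · obtain ⟨v, hv⟩ : ∃ v : Fin n, (v : ℕ) = n - 1 := ⟨⟨n-1, by omega⟩, rfl⟩
    have : Finset.filter (fun w => (Gr n).Adj i w) Finset.univ
        = (Finset.univ.erase i).erase v := by
      ext w
      simp only [mem_filter, mem_univ, true_and, gr_adj', mem_erase, Fin.ext_iff,
        and_true]
      have := w.isLt
      have := i.isLt
      omega
    rw [this, Finset.card_erase_of_mem, Finset.card_erase_of_mem (mem_univ i), card_univ,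
      Fintype.card_fin]
    · omega
    · simp only [mem_erase, mem_univ, and_true, Fin.ext_iff]
      omega

private lemma gr_card {n : ℕ} (hn : 5 ≤ n) :
    (Gr n).edgeSet.ncard = Nat.choose n 2 - n + 4 := by
  classical
  have hF : (Gr n).edgeSet.ncard = (Gr n).edgeFinset.card := by
    rw [Set.ncard_eq_toFinset_card']
    congr 1
  have hhs := SimpleGraph.sum_degrees_eq_twice_card_edges (Gr n)
  set f : ℕ → ℕ := fun k => if k = n-1 then 3 else if k < 3 then n-1 else n-2 with hf
  have hsum : ∑ i : Fin n, (Gr n).degree i = 3 * (n-1) + (n-4) * (n-2) + 3 := by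
    have e0 : ∑ i : Fin n, (Gr n).degree i = ∑ i : Fin n, f i.val :=
      Finset.sum_congr rfl (fun i _ => gr_deg hn i)
    rw [e0, Fin.sum_univ_eq_sum_range f n, Finset.range_eq_Ico,
      ← Finset.sum_Ico_consecutive f (Nat.zero_le 3) (by omega : 3 ≤ n),
      ← Finset.sum_Ico_consecutive f (by omega : 3 ≤ n-1) (by omega : n-1 ≤ n)]
    have h1 : ∑ k ∈ Finset.Ico 0 3, f k = 3 * (n-1) := by
      rw [← Finset.range_eq_Ico, Finset.sum_range_succ, Finset.sum_range_succ,
        Finset.sum_range_succ, Finset.sum_range_zero]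
      simp only [hf]
      split_ifs <;> omega
    have h2 : ∑ k ∈ Finset.Ico 3 (n-1), f k = (n-4) * (n-2) := by
      have hc : ∀ k ∈ Finset.Ico 3 (n-1), f k = n-2 := by
        intro k hk
        simp only [Finset.mem_Ico] at hk
        simp only [hf]
        split_ifs <;> omega
      rw [Finset.sum_congr rfl hc, Finset.sum_const, Nat.card_Ico, smul_eq_mul,
        show n - 1 - 3 = n - 4 from by omega]
    have h3 : ∑ k ∈ Finset.Ico (n-1) n, f k = 3 := by
      have : Finset.Ico (n-1) n = {n-1} := by
        rw [show n = n - 1 + 1 from by omega]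
        simp [Nat.Ico_succ_singleton]
      rw [this, Finset.sum_singleton]
      simp [hf]
    rw [h1, h2, h3]
    ring
  have hch : Nat.choose n 2 * 2 = n * (n - 1) := by
    rw [Nat.choose_two_right]
    refine Nat.div_mul_cancel ?_
    rcases Nat.even_or_odd n with h | h
    · exact (h.mul_right _).two_dvd
    · exact ((Nat.Odd.sub_odd h odd_one).mul_left _).two_dvd
  obtain ⟨m, rfl⟩ : ∃ m, n = m + 5 := ⟨n - 5, by omega⟩
  rw [hsum] at hhs
  rw [hF]
  have e1 : (m + 5 - 4) * (m + 5 - 2) = m * m + 4 * m + 3 := by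
    rw [show m + 5 - 4 = m + 1 from by omega, show m + 5 - 2 = m + 3 from by omega]
    ring
  have e2 : (m + 5) * (m + 5 - 1) = m * m + 9 * m + 20 := by
    rw [show m + 5 - 1 = m + 4 from by omega]
    ring
  rw [e1] at hhs
  rw [e2] at hch
  omega

private lemma gr_conn {n : ℕ} (hn : 5 ≤ n) : (Gr n).Connected := by
  have hz : (0 : ℕ) < n := by omega
  have hreach : ∀ u : Fin n, (Gr n).Reachable u ⟨0, hz⟩ := by
    intro u
    by_cases h : u = ⟨0, hz⟩
    · rw [h]
    · refine SimpleGraph.Adj.reachable ?_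
      rw [gr_adj']
      have := u.isLt
      constructor
      · simpa [Fin.ext_iff] using h
      · simp only [Fin.val_mk]
        omega
  rw [SimpleGraph.connected_iff]
  exact ⟨fun u w => (hreach u).trans (hreach w).symm, ⟨⟨0, hz⟩⟩⟩

private lemma gr_nobridge {n : ℕ} (hn : 5 ≤ n) (e : Sym2 (Fin n)) :
    ¬ (Gr n).IsBridge e := by
  induction e using Sym2.ind with
  | _ i j =>
  rw [SimpleGraph.isBridge_iff]
  intro hnr
  have hadj : (Gr n).Adj i j := by
    by_contra hna
    apply hnr
    have hdel : (Gr n).deleteEdges {s(i, j)} = Gr n := by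
      rw [deleteEdges_eq_self, Set.disjoint_singleton_right]
      exact hna
    rw [hdel]
    exact (gr_conn hn).preconnected i j
  have hA := (gr_adj' i j).mp hadj
  obtain ⟨hne, hcases⟩ := hA
  obtain ⟨m, hm3, hmi, hmj⟩ : ∃ m, m < 3 ∧ m ≠ (i : ℕ) ∧ m ≠ (j : ℕ) := by
    by_cases h0 : (0 ≠ (i:ℕ) ∧ 0 ≠ (j:ℕ))
    · exact ⟨0, by omega, h0.1, h0.2⟩
    by_cases h1 : (1 ≠ (i:ℕ) ∧ 1 ≠ (j:ℕ))
    · exact ⟨1, by omega, h1.1, h1.2⟩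
    push_neg at h0 h1
    exact ⟨2, by omega, by omega, by omega⟩
  set k : Fin n := ⟨m, by omega⟩ with hk
  have hkval : (k : ℕ) = m := rfl
  have hi := i.isLt
  have hj := j.isLt
  have hik : (Gr n).Adj i k := by rw [gr_adj']; rw [hkval]; omega
  have hkj : (Gr n).Adj k j := by rw [gr_adj']; rw [hkval]; omega
  have hik' : ((Gr n) \ SimpleGraph.fromEdgeSet {s(i, j)}).Adj i k := by
    rw [SimpleGraph.sdiff_adj]
    refine ⟨hik, ?_⟩
    rw [SimpleGraph.fromEdgeSet_adj]
    rintro ⟨hmem, -⟩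
    rw [Set.mem_singleton_iff, Sym2.eq_iff] at hmem
    rcases hmem with ⟨h1, h2⟩ | ⟨h1, h2⟩ <;>
      simp only [Fin.ext_iff, hkval] at h1 h2 <;> omega
  have hkj' : ((Gr n) \ SimpleGraph.fromEdgeSet {s(i, j)}).Adj k j := by
    rw [SimpleGraph.sdiff_adj]
    refine ⟨hkj, ?_⟩
    rw [SimpleGraph.fromEdgeSet_adj]
    rintro ⟨hmem, -⟩
    rw [Set.mem_singleton_iff, Sym2.eq_iff] at hmem
    rcases hmem with ⟨h1, h2⟩ | ⟨h1, h2⟩ <;>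
      simp only [Fin.ext_iff, hkval] at h1 h2 <;> omega
  exact hnr (hik'.reachable.trans hkj'.reachable)

private lemma relpow_le_two {V : Type*} {R : V → V → Prop} {u w : V}
    (h : ∃ k ≤ 2, RelPow R k u w) : u = w ∨ R u w ∨ ∃ x, R u x ∧ R x w := by
  obtain ⟨k, hk, hp⟩ := h
  obtain rfl | rfl | rfl : k = 0 ∨ k = 1 ∨ k = 2 := by omega
  · exact Or.inl hp
  · obtain ⟨x, h1, h2⟩ := hp
    exact Or.inr (Or.inl (by rwa [show x = w from h2] at h1))
  · obtain ⟨x, h1, y, h2, h3⟩ := hp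
    exact Or.inr (Or.inr ⟨x, h1, by rwa [show y = w from h3] at h2⟩)

private lemma gr_noorient {n : ℕ} (hn : 5 ≤ n) :
    ¬ ∃ R : Fin n → Fin n → Prop, IsOrientation (Gr n) R ∧ DiamLE R 2 := by
  rintro ⟨R, ⟨hR1, hR2⟩, hD⟩
  set v : Fin n := ⟨n - 1, by omega⟩ with hv
  set w3 : Fin n := ⟨3, by omega⟩ with hw3
  have hvval : (v : ℕ) = n - 1 := rfl
  have hwval : (w3 : ℕ) = 3 := rfl
  -- basic adjacency helpers
  have hadjcl : ∀ x y : Fin n, (x : ℕ) < n - 1 → (y : ℕ) < n - 1 → (x : ℕ) ≠ (y : ℕ) →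
      (Gr n).Adj x y := by
    intro x y hx hy hxy
    rw [gr_adj']
    omega
  have hadjv : ∀ x : Fin n, (x : ℕ) < 3 → (Gr n).Adj v x := by
    intro x hx
    rw [gr_adj', hvval]
    omega
  have hout : ∀ x, R v x → (x : ℕ) < 3 := by
    intro x hx
    have := (gr_adj' v x).mp (hR1 _ _ hx)
    rw [hvval] at this
    have := x.isLt
    omega
  have hin : ∀ x, R x v → (x : ℕ) < 3 := by
    intro x hx
    have := (gr_adj' x v).mp (hR1 _ _ hx)
    rw [hvval] at this
    have := x.isLt
    omega
  have hnadjvw3 : ¬ R v w3 := by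
    intro h
    have := hout _ h
    rw [hwval] at this
    omega
  have hnadjw3v : ¬ R w3 v := by
    intro h
    have := hin _ h
    rw [hwval] at this
    omega
  -- get a : v → a → w3
  obtain ⟨a, hva, haw⟩ : ∃ a, R v a ∧ R a w3 := by
    rcases relpow_le_two (hD v w3) with h | h | h
    · exact absurd (congrArg Fin.val h) (by rw [hvval, hwval]; omega)
    · exact absurd h hnadjvw3
    · exact h
  -- get b : w3 → b → v
  obtain ⟨b, hw3b, hbv⟩ : ∃ b, R w3 b ∧ R b v := by
    rcases relpow_le_two (hD w3 v) with h | h | h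
    · exact absurd (congrArg Fin.val h) (by rw [hvval, hwval]; omega)
    · exact absurd h hnadjw3v
    · exact h
  have ha3 : (a : ℕ) < 3 := hout a hva
  have hb3 : (b : ℕ) < 3 := hin b hbv
  have haw3 : (a : ℕ) ≠ 3 := by omega
  have hanb : (a : ℕ) ≠ (b : ℕ) := by
    intro h
    have hab : a = b := Fin.ext h
    subst hab
    have hAdj : (Gr n).Adj a w3 := hR1 _ _ haw
    exact ((hR2 _ _ hAdj).mp haw) hw3b
  -- the third vertex c
  set c : Fin n := ⟨3 - (a : ℕ) - (b : ℕ), by omega⟩ with hc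
  have hcval : (c : ℕ) = 3 - (a : ℕ) - (b : ℕ) := rfl
  have hc3 : (c : ℕ) < 3 := by rw [hcval]; omega
  have hca : (c : ℕ) ≠ (a : ℕ) := by rw [hcval]; omega
  have hcb : (c : ℕ) ≠ (b : ℕ) := by rw [hcval]; omega
  have hAdjvc : (Gr n).Adj v c := hadjv c hc3
  have hnvb : ¬ R v b := fun h => ((hR2 _ _ (hR1 _ _ h)).mp h) hbv
  have hnav : ¬ R a v := fun h => ((hR2 _ _ (hR1 _ _ hva)).mp hva) h
  by_cases hvc : R v c
  · -- in-neighbors of v = {b}; every clique vertex points to b; contradiction via b → w3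
    have hncv : ¬ R c v := (hR2 _ _ hAdjvc).mp hvc
    have hIb : ∀ x, R x v → x = b := by
      intro x hx
      have hx3 := hin x hx
      have hxa : (x : ℕ) ≠ (a : ℕ) := fun h => hnav (by rwa [Fin.ext h] at hx)
      have hxc : (x : ℕ) ≠ (c : ℕ) := fun h => hncv (by rwa [Fin.ext h] at hx)
      exact Fin.ext (by omega)
    have hyb : ∀ y : Fin n, (y : ℕ) < n - 1 → y ≠ b → R y b := by
      intro y hy hyb
      rcases relpow_le_two (hD y v) with h | h | ⟨x, h1, h2⟩
      · exact absurd (congrArg Fin.val h) (by rw [hvval]; omega)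
      · exact absurd (hIb y h) hyb
      · rwa [hIb x h2] at h1
    rcases relpow_le_two (hD b w3) with h | h | ⟨x, h1, h2⟩
    · exact absurd (congrArg Fin.val h) (by rw [hwval]; omega)
    · exact ((hR2 _ _ (hR1 _ _ h)).mp h) hw3b
    · -- x : R b x, R x w3
      by_cases hxv : x = v
      · exact hnadjvw3 (hxv ▸ h2)
      · have hAdjbx := (gr_adj' b x).mp (hR1 _ _ h1)
        have hxlt : (x : ℕ) < n - 1 := by
          have : (x : ℕ) ≠ n - 1 := fun h => hxv (Fin.ext (h.trans hvval.symm))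
          omega
        have hxb : x ≠ b := fun h => (Gr n).irrefl (hR1 _ _ (h ▸ h1))
        exact ((hR2 _ _ (hR1 _ _ h1)).mp h1) (hyb x hxlt hxb)
  · -- out-neighbors of v = {a}; a points to every clique vertex; contradiction via w3 → a
    have hcv : R c v := by
      by_contra h
      exact hvc ((hR2 _ _ hAdjvc).mpr h)
    have hnvc : ¬ R v c := hvc
    have hOa : ∀ x, R v x → x = a := by
      intro x hx
      have hx3 := hout x hx
      have hxb : (x : ℕ) ≠ (b : ℕ) := fun h => hnvb (by rwa [Fin.ext h] at hx)
      have hxc : (x : ℕ) ≠ (c : ℕ) := fun h => hnvc (by rwa [Fin.ext h] at hx)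
      exact Fin.ext (by omega)
    have hay : ∀ y : Fin n, (y : ℕ) < n - 1 → y ≠ a → R a y := by
      intro y hy hya
      rcases relpow_le_two (hD v y) with h | h | ⟨x, h1, h2⟩
      · exact absurd (congrArg Fin.val h.symm) (by rw [hvval]; omega)
      · exact absurd (hOa y h) hya
      · rwa [hOa x h1] at h2
    rcases relpow_le_two (hD w3 a) with h | h | ⟨x, h1, h2⟩
    · exact absurd (congrArg Fin.val h) (by rw [hwval]; omega)
    · exact ((hR2 _ _ (hR1 _ _ h)).mp h) haw
    · -- x : R w3 x, R x a
      by_cases hxv : x = v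
      · exact hnadjw3v (hxv ▸ h1)
      · have hxlt : (x : ℕ) < n - 1 := by
          have hAdjxa := (gr_adj' x a).mp (hR1 _ _ h2)
          have : (x : ℕ) ≠ n - 1 := fun h => hxv (Fin.ext (h.trans hvval.symm))
          omega
        have hxa : x ≠ a := fun h => (Gr n).irrefl (hR1 _ _ (h ▸ h2))
        exact ((hR2 _ _ (hR1 _ _ h2)).mp h2) (hay x hxlt hxa)

theorem stmt_18 (n : ℕ) (hn : 5 ≤ n) :
    (SimpleGraph.fromRel (fun i j : Fin n =>
        ((i : ℕ) < n - 1 ∧ (j : ℕ) < n - 1) ∨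
        ((i : ℕ) = n - 1 ∧ (j : ℕ) < 3))).edgeSet.ncard
        = Nat.choose n 2 - n + 4 ∧
    Bridgeless (SimpleGraph.fromRel (fun i j : Fin n =>
        ((i : ℕ) < n - 1 ∧ (j : ℕ) < n - 1) ∨
        ((i : ℕ) = n - 1 ∧ (j : ℕ) < 3))) ∧
    ¬ ∃ R : Fin n → Fin n → Prop,
        IsOrientation (SimpleGraph.fromRel (fun i j : Fin n =>
          ((i : ℕ) < n - 1 ∧ (j : ℕ) < n - 1) ∨
          ((i : ℕ) = n - 1 ∧ (j : ℕ) < 3))) R ∧ DiamLE R 2 := by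
  refine ⟨gr_card hn, ⟨gr_conn hn, gr_nobridge hn⟩, gr_noorient hn⟩
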